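/- For nonzero vectors ρ, ρ̄ in ℝ^d with nonnegative entries, define their normalized versions π = ρ/|ρ| and π̄ = ρ̄/|ρ̄| where |x| = Σᵢ|xᵢ|, and define |ρ ∧ ρ̄| = (1/2)Σ_{i,j} |ρᵢρ̄ⱼ - ρ̄ᵢρⱼ|. Then |ρ ∧ ρ̄|/(|ρ||ρ̄|) ≤ |π - π̄| ≤ 2|ρ ∧ ρ̄|/(|ρ||ρ̄|). -/

import Mathlib

/-- For nonzero vectors `ρ, ρ̄` in `ℝ^d` with nonnegative entries, with
`π = ρ/|ρ|`, `π̄ = ρ̄/|ρ̄|` (ℓ¹ normalization) and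
`|ρ ∧ ρ̄| = (1/2) ∑_{i,j} |ρᵢ ρ̄ⱼ - ρ̄ᵢ ρⱼ|`, one has
`|ρ ∧ ρ̄|/(|ρ||ρ̄|) ≤ |π - π̄| ≤ 2 |ρ ∧ ρ̄|/(|ρ||ρ̄|)`. -/
theorem stmt_0 (d : ℕ) (ρ ρbar : Fin d → ℝ)
    (hρ : ∀ i, 0 ≤ ρ i) (hρbar : ∀ i, 0 ≤ ρbar i)
    (hρ0 : ρ ≠ 0) (hρbar0 : ρbar ≠ 0) :
    (∑ i, ∑ j, |ρ i * ρbar j - ρbar i * ρ j|) / 2 /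
        ((∑ i, |ρ i|) * (∑ i, |ρbar i|)) ≤
      ∑ i, |ρ i / (∑ k, |ρ k|) - ρbar i / (∑ k, |ρbar k|)| ∧
    ∑ i, |ρ i / (∑ k, |ρ k|) - ρbar i / (∑ k, |ρbar k|)| ≤
      2 * ((∑ i, ∑ j, |ρ i * ρbar j - ρbar i * ρ j|) / 2 /
        ((∑ i, |ρ i|) * (∑ i, |ρbar i|))) := by
  have hS : (0:ℝ) < ∑ k, |ρ k| := by
    have h1 : ∃ i, ρ i ≠ 0 := by
      by_contra h; push_neg at h; exact hρ0 (funext h)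
    obtain ⟨i, hi⟩ := h1
    exact Finset.sum_pos' (fun k _ => abs_nonneg _)
      ⟨i, Finset.mem_univ i, abs_pos.2 hi⟩
  have hT : (0:ℝ) < ∑ k, |ρbar k| := by
    have h1 : ∃ i, ρbar i ≠ 0 := by
      by_contra h; push_neg at h; exact hρbar0 (funext h)
    obtain ⟨i, hi⟩ := h1
    exact Finset.sum_pos' (fun k _ => abs_nonneg _)
      ⟨i, Finset.mem_univ i, abs_pos.2 hi⟩
  set S := ∑ k, |ρ k| with hSdef
  set T := ∑ k, |ρbar k| with hTdef
  set π : Fin d → ℝ := fun i => ρ i / S with hπ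
  set πb : Fin d → ℝ := fun i => ρbar i / T with hπb
  have hsumπ : ∑ i, π i = 1 := by
    rw [hπ, ← Finset.sum_div]
    have : ∑ i, ρ i = S := Finset.sum_congr rfl (fun i _ => (abs_of_nonneg (hρ i)).symm)
    rw [this, div_self hS.ne']
  have hsumπb : ∑ i, πb i = 1 := by
    rw [hπb, ← Finset.sum_div]
    have : ∑ i, ρbar i = T := Finset.sum_congr rfl (fun i _ => (abs_of_nonneg (hρbar i)).symm)
    rw [this, div_self hT.ne']
  have hπnn : ∀ i, 0 ≤ π i := fun i => div_nonneg (hρ i) hS.le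
  have hπbnn : ∀ i, 0 ≤ πb i := fun i => div_nonneg (hρbar i) hT.le
  set F := ∑ i, ∑ j, |π i * πb j - πb i * π j| with hF
  set D := ∑ i, |π i - πb i| with hD
  have hEF : (∑ i, ∑ j, |ρ i * ρbar j - ρbar i * ρ j|) / 2 / (S * T) = F / 2 := by
    have key : ∀ i j, |π i * πb j - πb i * π j| = |ρ i * ρbar j - ρbar i * ρ j| / (S * T) := by
      intro i j
      have h1 : π i * πb j - πb i * π j = (ρ i * ρbar j - ρbar i * ρ j) / (S * T) := by
        rw [hπ, hπb]; field_simp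
      rw [h1, abs_div, abs_of_pos (mul_pos hS hT)]
    have : F = (∑ i, ∑ j, |ρ i * ρbar j - ρbar i * ρ j|) / (S * T) := by
      rw [hF]; simp only [key, ← Finset.sum_div]
    rw [this]; ring
  have hupper : D ≤ F := by
    apply Finset.sum_le_sum
    intro i _
    have h1 : π i - πb i = ∑ j, (π i * πb j - πb i * π j) := by
      rw [Finset.sum_sub_distrib, ← Finset.mul_sum, ← Finset.mul_sum, hsumπ, hsumπb]; ring
    calc |π i - πb i| = |∑ j, (π i * πb j - πb i * π j)| := by rw [h1]
      _ ≤ ∑ j, |π i * πb j - πb i * π j| := Finset.abs_sum_le_sum_abs _ _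
  have hlower : F ≤ 2 * D := by
    have step : ∀ i j, |π i * πb j - πb i * π j| ≤ π i * |πb j - π j| + |π i - πb i| * π j := by
      intro i j
      calc |π i * πb j - πb i * π j|
          = |π i * (πb j - π j) + (π i - πb i) * π j| := by ring_nf
        _ ≤ |π i * (πb j - π j)| + |(π i - πb i) * π j| := abs_add_le _ _
        _ = π i * |πb j - π j| + |π i - πb i| * π j := by
            rw [abs_mul, abs_mul, abs_of_nonneg (hπnn i), abs_of_nonneg (hπnn j)]
    have hDcomm : ∑ j, |πb j - π j| = D := by
      rw [hD]; exact Finset.sum_congr rfl fun j _ => abs_sub_comm _ _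
    calc F ≤ ∑ i, ∑ j, (π i * |πb j - π j| + |π i - πb i| * π j) :=
          Finset.sum_le_sum fun i _ => Finset.sum_le_sum fun j _ => step i j
      _ = ∑ i, (π i * D + |π i - πb i| * 1) := by
          refine Finset.sum_congr rfl fun i _ => ?_
          rw [Finset.sum_add_distrib, ← Finset.mul_sum, ← Finset.mul_sum, hDcomm, hsumπ]
      _ = 2 * D := by
          simp only [mul_one]
          rw [Finset.sum_add_distrib, ← Finset.sum_mul, hsumπ, ← hD]; ring
  constructor
  · rw [hEF]; linarith
  · rw [hEF]; linarith
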